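/- arXiv:2605.11100 — 2 statements merged into one kernel-verified Lean document; each statement's English description precedes it below -/
import Mathlib

section
/- Let u be a rational number with u² ≠ 0, 1, and E_u : y² = x(x+1)(x+u²). Then the points (u, u(u+1)), (u, -u(u+1)), (-u, u(u-1)), (-u, -u(u-1)) lie on E_u, each has order exactly 4, and doubling any of them gives the 2-torsion point (0,0). -/
/-- The elliptic curve `E_u : y² = x(x+1)(x+u²)` over `ℚ`, as a Weierstrass curve. -/
def Eu (u : ℚ) : WeierstrassCurve ℚ :=
  { a₁ := 0, a₂ := 1 + u ^ 2, a₃ := 0, a₄ := u ^ 2, a₆ := 0 }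

open WeierstrassCurve.Affine in
lemma Point.some_eq_some' {F : Type*} [Field F] {W : WeierstrassCurve.Affine F}
    {x₁ y₁ x₂ y₂ : F} {h₁ : W.Nonsingular x₁ y₁} {h₂ : W.Nonsingular x₂ y₂}
    (hx : x₁ = x₂) (hy : y₁ = y₂) :
    WeierstrassCurve.Affine.Point.some _ _ h₁ = WeierstrassCurve.Affine.Point.some _ _ h₂ := by
  subst hx; subst hy; rfl

open WeierstrassCurve.Affine in
lemma key_order_four (u a b : ℚ) (hu0 : u ^ 2 ≠ 0) (hu1 : u ^ 2 ≠ 1) (hb : b ≠ 0)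
    (ha2 : a ^ 2 = u ^ 2)
    (heq : b ^ 2 = a ^ 3 + (1 + u ^ 2) * a ^ 2 + u ^ 2 * a) :
    ∃ (h : (Eu u).toAffine.Nonsingular a b) (h₀ : (Eu u).toAffine.Nonsingular 0 0),
      addOrderOf (WeierstrassCurve.Affine.Point.some _ _ h) = 4 ∧
        2 • WeierstrassCurve.Affine.Point.some _ _ h = WeierstrassCurve.Affine.Point.some _ _ h₀ := by
  have ha : a ≠ 0 := fun h => hu0 (by rw [← ha2, h]; ring)
  have hΔ : (Eu u).toAffine.Δ ≠ 0 := by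
    have hΔeq : (Eu u).toAffine.Δ = 16 * (u ^ 2) ^ 2 * (u ^ 2 - 1) ^ 2 := by
      simp only [Eu, WeierstrassCurve.toAffine, WeierstrassCurve.Δ, WeierstrassCurve.b₂,
        WeierstrassCurve.b₄, WeierstrassCurve.b₆, WeierstrassCurve.b₈]
      ring
    rw [hΔeq]
    exact mul_ne_zero (mul_ne_zero (by norm_num) (pow_ne_zero _ hu0))
      (pow_ne_zero _ (sub_ne_zero.mpr hu1))
  have hP : (Eu u).toAffine.Nonsingular a b := by
    refine ((Eu u).toAffine.equation_iff_nonsingular_of_Δ_ne_zero hΔ).mp ?_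
    rw [equation_iff]
    simp only [Eu]
    linear_combination heq
  have h0 : (Eu u).toAffine.Nonsingular 0 0 := by
    refine ((Eu u).toAffine.equation_iff_nonsingular_of_Δ_ne_zero hΔ).mp ?_
    rw [equation_iff]
    simp [Eu]
  refine ⟨hP, h0, ?_⟩
  have hnegY : (Eu u).toAffine.negY a b = -b := by simp [negY, Eu]
  have hbne : b ≠ (Eu u).toAffine.negY a b := by
    rw [hnegY]; intro h; exact hb (by linarith)
  set ℓ := (Eu u).toAffine.slope a a b b with hℓdef
  have hℓ : ℓ = (3 * a ^ 2 + 2 * (1 + u ^ 2) * a + u ^ 2) / (2 * b) := by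
    rw [hℓdef, slope_of_Y_ne rfl hbne]
    simp [Eu]
    ring
  have hla : ℓ * a = b := by
    rw [hℓ]
    field_simp
    linear_combination -2 * heq + a * ha2
  have hl2 : ℓ ^ 2 = 1 + u ^ 2 + 2 * a := by
    have h2 : ℓ ^ 2 * a ^ 2 = (1 + u ^ 2 + 2 * a) * a ^ 2 := by
      linear_combination (ℓ * a + b) * hla + heq - a * ha2
    exact mul_right_cancel₀ (pow_ne_zero 2 ha) h2
  have hxx : (Eu u).toAffine.addX a a ℓ = 0 := by
    simp only [WeierstrassCurve.Affine.addX, Eu]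
    linear_combination hl2
  have hyy : (Eu u).toAffine.addY a a b ℓ = 0 := by
    simp only [WeierstrassCurve.Affine.addY, WeierstrassCurve.Affine.negAddY]
    rw [hxx]
    simp only [WeierstrassCurve.Affine.negY, Eu]
    linear_combination hla
  have h2P : 2 • WeierstrassCurve.Affine.Point.some _ _ hP = WeierstrassCurve.Affine.Point.some _ _ h0 := by
    rw [two_nsmul, WeierstrassCurve.Affine.Point.add_self_of_Y_ne hbne]
    exact Point.some_eq_some' hxx hyy
  refine ⟨?_, h2P⟩
  have h0negY : (0 : ℚ) = (Eu u).toAffine.negY 0 0 := by simp [negY, Eu]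
  have h4P : (2 : ℕ) ^ 2 • WeierstrassCurve.Affine.Point.some _ _ hP = 0 := by
    have : (2:ℕ) ^ 2 = 2 * 2 := by norm_num
    rw [this, mul_smul, h2P, two_nsmul,
      WeierstrassCurve.Affine.Point.add_self_of_Y_eq h0negY]
  have hn2P : ¬ (2 : ℕ) ^ 1 • WeierstrassCurve.Affine.Point.some _ _ hP = 0 := by
    rw [pow_one, h2P]
    exact WeierstrassCurve.Affine.Point.some_ne_zero h0
  have := addOrderOf_eq_prime_pow hn2P h4P
  simpa using this

/-- The points `(u, ±u(u+1))` and `(-u, ±u(u-1))` lie on `E_u`, have order exactly 4,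
and doubling any of them gives the 2-torsion point `(0,0)`. -/
theorem order_four_points_of_Eu (u : ℚ) (hu0 : u ^ 2 ≠ 0) (hu1 : u ^ 2 ≠ 1)
    (a b : ℚ)
    (hab : (a, b) = (u, u * (u + 1)) ∨ (a, b) = (u, -(u * (u + 1))) ∨
      (a, b) = (-u, u * (u - 1)) ∨ (a, b) = (-u, -(u * (u - 1)))) :
    ∃ (h : (Eu u).toAffine.Nonsingular a b) (h₀ : (Eu u).toAffine.Nonsingular 0 0),
      addOrderOf (WeierstrassCurve.Affine.Point.some _ _ h) = 4 ∧
        2 • WeierstrassCurve.Affine.Point.some _ _ h = WeierstrassCurve.Affine.Point.some _ _ h₀ := by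
  have hu : u ≠ 0 := fun h => hu0 (by rw [h]; ring)
  have hup : u + 1 ≠ 0 := fun h => hu1 (by nlinarith)
  have hum : u - 1 ≠ 0 := fun h => hu1 (by nlinarith)
  simp only [Prod.mk.injEq] at hab
  rcases hab with ⟨h1, h2⟩ | ⟨h1, h2⟩ | ⟨h1, h2⟩ | ⟨h1, h2⟩ <;> rw [h1, h2]
  · exact key_order_four u u (u * (u + 1)) hu0 hu1 (mul_ne_zero hu hup) rfl (by ring)
  · exact key_order_four u u (-(u * (u + 1))) hu0 hu1 (neg_ne_zero.mpr (mul_ne_zero hu hup)) rfl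
      (by ring)
  · exact key_order_four u (-u) (u * (u - 1)) hu0 hu1 (mul_ne_zero hu hum) (by ring) (by ring)
  · exact key_order_four u (-u) (-(u * (u - 1))) hu0 hu1 (neg_ne_zero.mpr (mul_ne_zero hu hum))
      (by ring) (by ring)
end

section
/- Let u ∈ ℚ with u ≠ 0, ±1, and consider the function h = (u(x+1)+y)/(x+u) on E_u : y² = x(x+1)(x+u²). Then the divisor of h is [(-1,0)] + [(u, -u²-u)] - [(-u, -u²+u)] - [O], i.e. h vanishes to order 1 at (-1,0) and (u, -u²-u), and has simple poles at (-u, -u²+u) and at the point at infinity O, and no other zeros or poles. -/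
open Polynomial

open WeierstrassCurve.Affine WeierstrassCurve.Affine.CoordinateRing Ideal in
/-- Let `u ∈ ℚ`, `u ≠ 0, ±1`, and consider the function `h = (u(x+1)+y)/(x+u)` on
`E_u : y² = x(x+1)(x+u²)`.  Then the divisor of `h` is
`[(-1,0)] + [(u,-u²-u)] - [(-u,-u²+u)] - [O]`.  This is formalised via the factorisations of
the principal ideals generated by the numerator `y + u(x+1)` and the denominator `x + u` in
the affine coordinate ring of `E_u` into the maximal ideals of the points
`(-u, u²-u)`, `(-1,0)`, `(u,-u²-u)` and `(-u,-u²+u)`, namely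
`(y+u(x+1)) = [(-u,u²-u)] + [(-1,0)] + [(u,-u²-u)] - 3[O]` and
`(x+u) = [(-u,-u²+u)] + [(-u,u²-u)] - 2[O]`, which determine the divisor of `h` (including
the simple pole at `O`, as principal divisors have degree zero).  In particular, the four
affine points involved are pairwise distinct nonsingular points of `E_u`. -/
theorem divisor_of_h (u : ℚ) (hu0 : u ≠ 0) (hu1 : u ≠ 1) (hum1 : u ≠ -1) :
    (Eu u).toAffine.Nonsingular (-1) 0 ∧
      (Eu u).toAffine.Nonsingular u (-u ^ 2 - u) ∧
        (Eu u).toAffine.Nonsingular (-u) (-u ^ 2 + u) ∧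
          (Eu u).toAffine.Nonsingular (-u) (u ^ 2 - u) ∧
            List.Pairwise (· ≠ ·)
              [((-1 : ℚ), (0 : ℚ)), (u, -u ^ 2 - u), (-u, -u ^ 2 + u), (-u, u ^ 2 - u)] ∧
        Ideal.span {WeierstrassCurve.Affine.CoordinateRing.mk (Eu u).toAffine
            (Polynomial.X + Polynomial.C (Polynomial.C u * (Polynomial.X + 1)))} =
          WeierstrassCurve.Affine.CoordinateRing.XYIdeal (Eu u).toAffine (-u)
              (Polynomial.C (u ^ 2 - u)) *
            WeierstrassCurve.Affine.CoordinateRing.XYIdeal (Eu u).toAffine (-1) 0 *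
              WeierstrassCurve.Affine.CoordinateRing.XYIdeal (Eu u).toAffine u
                (Polynomial.C (-u ^ 2 - u)) ∧
          Ideal.span {WeierstrassCurve.Affine.CoordinateRing.mk (Eu u).toAffine
              (Polynomial.C (Polynomial.X + Polynomial.C u))} =
            WeierstrassCurve.Affine.CoordinateRing.XYIdeal (Eu u).toAffine (-u)
                (Polynomial.C (-u ^ 2 + u)) *
              WeierstrassCurve.Affine.CoordinateRing.XYIdeal (Eu u).toAffine (-u)
                (Polynomial.C (u ^ 2 - u)) := by
  set W := (Eu u).toAffine with hWdef
  have hu1' : u + 1 ≠ 0 := fun h => hum1 (by linarith)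
  have hu1'' : u - 1 ≠ 0 := sub_ne_zero.mpr hu1
  have ha₁ : W.a₁ = 0 := rfl
  have ha₂ : W.a₂ = 1 + u ^ 2 := rfl
  have ha₃ : W.a₃ = 0 := rfl
  have ha₄ : W.a₄ = u ^ 2 := rfl
  have ha₆ : W.a₆ = 0 := rfl
  have h1 : W.Nonsingular (-1) 0 := by
    rw [nonsingular_iff, equation_iff, ha₁, ha₂, ha₃, ha₄, ha₆]
    constructor
    · ring
    · left
      intro h
      have : (u - 1) * (u + 1) = 0 := by linear_combination h
      rcases mul_eq_zero.mp this with h' | h'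
      exacts [hu1'' h', hu1' h']
  have h2 : W.Nonsingular u (-u ^ 2 - u) := by
    rw [nonsingular_iff, equation_iff, ha₁, ha₂, ha₃, ha₄, ha₆]
    refine ⟨by ring, Or.inr fun h => ?_⟩
    have : u * (u + 1) = 0 := by linear_combination -h / 2
    rcases mul_eq_zero.mp this with h' | h'
    exacts [hu0 h', hu1' h']
  have h3 : W.Nonsingular (-u) (-u ^ 2 + u) := by
    rw [nonsingular_iff, equation_iff, ha₁, ha₂, ha₃, ha₄, ha₆]
    refine ⟨by ring, Or.inr fun h => ?_⟩
    have : u * (u - 1) = 0 := by linear_combination -h / 2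
    rcases mul_eq_zero.mp this with h' | h'
    exacts [hu0 h', hu1'' h']
  have h4 : W.Nonsingular (-u) (u ^ 2 - u) := by
    rw [nonsingular_iff, equation_iff, ha₁, ha₂, ha₃, ha₄, ha₆]
    refine ⟨by ring, Or.inr fun h => ?_⟩
    have : u * (u - 1) = 0 := by linear_combination h / 2
    rcases mul_eq_zero.mp this with h' | h'
    exacts [hu0 h', hu1'' h']
  have d12 : ((-1 : ℚ), (0 : ℚ)) ≠ (u, -u ^ 2 - u) := by
    intro h; injection h with h1 h2; exact hum1 h1.symm
  have d13 : ((-1 : ℚ), (0 : ℚ)) ≠ (-u, -u ^ 2 + u) := by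
    intro h; injection h with h1 h2; exact hu1 (by linarith)
  have d14 : ((-1 : ℚ), (0 : ℚ)) ≠ (-u, u ^ 2 - u) := by
    intro h; injection h with h1 h2; exact hu1 (by linarith)
  have d23 : ((u : ℚ), -u ^ 2 - u) ≠ (-u, -u ^ 2 + u) := by
    intro h; injection h with h1 h2; exact hu0 (by linarith)
  have d24 : ((u : ℚ), -u ^ 2 - u) ≠ (-u, u ^ 2 - u) := by
    intro h; injection h with h1 h2; exact hu0 (by linarith)
  have d34 : ((-u : ℚ), -u ^ 2 + u) ≠ (-u, u ^ 2 - u) := by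
    intro h; injection h with h1 h2
    have : u * (u - 1) = 0 := by linear_combination -h2 / 2
    rcases mul_eq_zero.mp this with h' | h'
    exacts [hu0 h', hu1'' h']
  have hpair : List.Pairwise (· ≠ ·)
      [((-1 : ℚ), (0 : ℚ)), (u, -u ^ 2 - u), (-u, -u ^ 2 + u), (-u, u ^ 2 - u)] := by
    refine List.Pairwise.cons ?_ (List.Pairwise.cons ?_
      (List.Pairwise.cons ?_ (List.Pairwise.cons ?_ List.Pairwise.nil)))
    · intro p hp; fin_cases hp; exacts [d12, d13, d14]
    · intro p hp; fin_cases hp; exacts [d23, d24]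
    · intro p hp; fin_cases hp; exacts [d34]
    · intro p hp; fin_cases hp
  -- slope of the line through (-1, 0) and (u, -u²-u)
  have hx12 : (-1 : ℚ) ≠ u := fun h => hum1 h.symm
  have hs : W.slope (-1) u 0 (-u ^ 2 - u) = -u := by
    rw [slope_of_X_ne hx12, div_eq_iff (sub_ne_zero.mpr hx12)]
    ring
  have haddX : W.addX (-1) u (-u) = -u := by
    rw [addX, ha₁, ha₂]; ring
  have haddY : W.addY (-1) u 0 (-u) = -u ^ 2 + u := by
    rw [addY, negAddY, haddX, negY, ha₁, ha₃]; ring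
  have hxy : (-1 : ℚ) = u → (0 : ℚ) ≠ W.negY u (-u ^ 2 - u) := fun h => absurd h hx12
  have e1 := XYIdeal_mul_XYIdeal (W := W) h1.left h2.left (fun h => hxy h.1 h.2)
  rw [hs, haddX, haddY] at e1
  have e2 := XYIdeal_neg_mul (W := W) h4
  have hnegY4 : W.negY (-u) (u ^ 2 - u) = -u ^ 2 + u := by
    rw [negY, ha₁, ha₃]; ring
  rw [hnegY4] at e2
  -- cancellation of XIdeal W (-u) via fractional ideals
  have hcan : ∀ A B : Ideal W.CoordinateRing,
      XIdeal W (-u) * A = XIdeal W (-u) * B → A = B := by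
    intro A B h
    have hx := FractionalIdeal.coe_ideal_span_singleton_mul_inv W.FunctionField
      (XClass_ne_zero (W' := W) (-u))
    have hunit : IsUnit ((XIdeal W (-u) : Ideal W.CoordinateRing) :
        FractionalIdeal (nonZeroDivisors W.CoordinateRing) W.FunctionField) := by
      exact IsUnit.of_mul_eq_one _ hx
    have hco := congrArg
      (fun I : Ideal W.CoordinateRing =>
        (I : FractionalIdeal (nonZeroDivisors W.CoordinateRing) W.FunctionField)) h
    simp only [FractionalIdeal.coeIdeal_mul] at hco
    exact FractionalIdeal.coeIdeal_injective' le_rfl (hunit.mul_left_cancel hco)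
  -- the numerator generates the YIdeal of the line
  have hgen : Ideal.span {WeierstrassCurve.Affine.CoordinateRing.mk W
      (Polynomial.X + Polynomial.C (Polynomial.C u * (Polynomial.X + 1)))} =
      YIdeal W (linePolynomial (-1) 0 (-u)) := by
    rw [YIdeal, YClass]
    congr 2
    simp only [linePolynomial, map_neg, map_one, map_add, _root_.map_mul, map_sub, map_zero, C_0]
    ring
  have key : YIdeal W (linePolynomial (-1) 0 (-u)) =
      XYIdeal W (-u) (Polynomial.C (u ^ 2 - u)) * XYIdeal W (-1) 0 *
        XYIdeal W u (Polynomial.C (-u ^ 2 - u)) := by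
    apply hcan
    calc XIdeal W (-u) * (YIdeal W (linePolynomial (-1) 0 (-u))) =
        YIdeal W (linePolynomial (-1) 0 (-u)) * XYIdeal W (-u) (Polynomial.C (-u ^ 2 + u)) *
          XYIdeal W (-u) (Polynomial.C (u ^ 2 - u)) := by
          rw [mul_assoc, e2, mul_comm]
      _ = XIdeal W (-u) * (XYIdeal W (-1) (Polynomial.C 0) *
            XYIdeal W u (Polynomial.C (-u ^ 2 - u))) *
          XYIdeal W (-u) (Polynomial.C (u ^ 2 - u)) := by rw [e1]
      _ = XIdeal W (-u) * (XYIdeal W (-u) (Polynomial.C (u ^ 2 - u)) * XYIdeal W (-1) 0 *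
            XYIdeal W u (Polynomial.C (-u ^ 2 - u))) := by rw [map_zero]; ring
  have hfirst : Ideal.span {WeierstrassCurve.Affine.CoordinateRing.mk W
      (Polynomial.X + Polynomial.C (Polynomial.C u * (Polynomial.X + 1)))} =
      XYIdeal W (-u) (Polynomial.C (u ^ 2 - u)) * XYIdeal W (-1) 0 *
        XYIdeal W u (Polynomial.C (-u ^ 2 - u)) := hgen.trans key
  have hsecond : Ideal.span {WeierstrassCurve.Affine.CoordinateRing.mk W
      (Polynomial.C (Polynomial.X + Polynomial.C u))} =
      XYIdeal W (-u) (Polynomial.C (-u ^ 2 + u)) * XYIdeal W (-u) (Polynomial.C (u ^ 2 - u)) := by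
    rw [e2, XIdeal, XClass]
    congr 3
    rw [map_neg, sub_neg_eq_add]
  exact ⟨h1, h2, h3, h4, hpair, hfirst, hsecond⟩
end
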